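/- For every nonempty open subinterval I ⊆ [1/3, 2] there exists a bound N such that for every x ∈ [1/3, 2] there is some n ≤ N with f^n(x) ∈ I, where f is the Kari map. -/

import Mathlib

open Real Set

lemma kari_log_ne (p q : ℕ) (hp : 0 < p) : (p : ℝ) * Real.log 2 ≠ (q : ℝ) * Real.log 6 := by
  intro h
  rw [← Real.log_pow, ← Real.log_pow] at h
  have h2 : ((2 : ℕ) : ℝ) ^ p = ((6 : ℕ) : ℝ) ^ q := by
    have := Real.log_injOn_pos (Set.mem_Ioi.mpr (by positivity))
      (Set.mem_Ioi.mpr (by positivity)) h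
    exact_mod_cast this
  have hn : (2 : ℕ) ^ p = 6 ^ q := by exact_mod_cast h2
  rcases Nat.eq_zero_or_pos q with rfl | hq
  · simp at hn
    have := Nat.one_lt_pow hp.ne' (show 1 < 2 by norm_num)
    omega
  · have h3 : (3:ℕ) ∣ 2 ^ p := by
      rw [hn]
      exact dvd_pow (by norm_num) hq.ne'
    have := (Nat.Prime.dvd_of_dvd_pow (p := 3) (by norm_num) h3)
    omega

lemma kari_dense_subgroup :
    Dense ((AddSubgroup.closure ({Real.log 2, Real.log 6} : Set ℝ) : AddSubgroup ℝ) : Set ℝ) := by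
  rcases AddSubgroup.dense_or_cyclic (AddSubgroup.closure ({Real.log 2, Real.log 6} : Set ℝ)) with
    h | ⟨c, hc⟩
  · exact h
  · exfalso
    have h2 : Real.log 2 ∈ AddSubgroup.closure ({Real.log 2, Real.log 6} : Set ℝ) :=
      AddSubgroup.subset_closure (by simp)
    have h6 : Real.log 6 ∈ AddSubgroup.closure ({Real.log 2, Real.log 6} : Set ℝ) :=
      AddSubgroup.subset_closure (by simp)
    rw [hc, AddSubgroup.mem_closure_singleton] at h2 h6
    obtain ⟨m, hm⟩ := h2
    obtain ⟨n, hn⟩ := h6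
    have key : (n : ℝ) * Real.log 2 = (m : ℝ) * Real.log 6 := by
      rw [← hm, ← hn]; push_cast [zsmul_eq_mul]; ring
    have hl2 : (0:ℝ) < Real.log 2 := Real.log_pos (by norm_num)
    have hl6 : (0:ℝ) < Real.log 6 := Real.log_pos (by norm_num)
    have hn0 : n ≠ 0 := by rintro rfl; simp at hn; rw [← hn] at hl6; simp at hl6
    rcases lt_or_gt_of_ne hn0 with hneg | hpos
    · have hnr : (n:ℝ) < 0 := by exact_mod_cast hneg
      have hmr : (m:ℝ) < 0 := by nlinarith
      have hmneg : m < 0 := by exact_mod_cast hmr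
      refine kari_log_ne (-n).toNat (-m).toNat (by omega) ?_
      have e1 : (((-n).toNat : ℕ) : ℝ) = -(n : ℝ) := by
        have := Int.toNat_of_nonneg (show (0:ℤ) ≤ -n by omega)
        exact_mod_cast congrArg (Int.cast : ℤ → ℝ) this
      have e2 : (((-m).toNat : ℕ) : ℝ) = -(m : ℝ) := by
        have := Int.toNat_of_nonneg (show (0:ℤ) ≤ -m by omega)
        exact_mod_cast congrArg (Int.cast : ℤ → ℝ) this
      rw [e1, e2]; linarith
    · have hnr : (0:ℝ) < (n:ℝ) := by exact_mod_cast hpos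
      have hmr : (0:ℝ) < (m:ℝ) := by nlinarith
      have hmpos : 0 < m := by exact_mod_cast hmr
      refine kari_log_ne n.toNat m.toNat (by omega) ?_
      have e1 : ((n.toNat : ℕ) : ℝ) = (n : ℝ) := by
        have := Int.toNat_of_nonneg (show (0:ℤ) ≤ n by omega)
        exact_mod_cast congrArg (Int.cast : ℤ → ℝ) this
      have e2 : ((m.toNat : ℕ) : ℝ) = (m : ℝ) := by
        have := Int.toNat_of_nonneg (show (0:ℤ) ≤ m by omega)
        exact_mod_cast congrArg (Int.cast : ℤ → ℝ) this
      rw [e1, e2]; linarith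

lemma kari_denseRange_nsmul :
    DenseRange (fun n : ℕ => n • ((Real.log 2 : ℝ) : AddCircle (Real.log 6))) := by
  haveI : Fact ((0:ℝ) < Real.log 6) := ⟨Real.log_pos (by norm_num)⟩
  rw [← denseRange_zsmul_iff_nsmul]
  have hcont : Continuous (QuotientAddGroup.mk : ℝ → AddCircle (Real.log 6)) :=
    continuous_quotient_mk'
  have hsurj : Function.Surjective (QuotientAddGroup.mk : ℝ → AddCircle (Real.log 6)) :=
    Quotient.exists_rep
  have hd : Dense ((QuotientAddGroup.mk : ℝ → AddCircle (Real.log 6)) ''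
      (AddSubgroup.closure ({Real.log 2, Real.log 6} : Set ℝ) : Set ℝ)) :=
    hsurj.denseRange.dense_image hcont kari_dense_subgroup
  have hsub : ((QuotientAddGroup.mk : ℝ → AddCircle (Real.log 6)) ''
      (AddSubgroup.closure ({Real.log 2, Real.log 6} : Set ℝ) : Set ℝ)) ⊆
      Set.range (fun n : ℤ => n • ((Real.log 2 : ℝ) : AddCircle (Real.log 6))) := by
    rintro _ ⟨x, hx, rfl⟩
    have hle : AddSubgroup.closure ({Real.log 2, Real.log 6} : Set ℝ) ≤
        (AddSubgroup.zmultiples ((Real.log 2 : ℝ) : AddCircle (Real.log 6))).comap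
          (QuotientAddGroup.mk' (AddSubgroup.zmultiples (Real.log 6))) := by
      rw [AddSubgroup.closure_le]
      rintro y (rfl | rfl)
      · exact AddSubgroup.mem_zmultiples _
      · have h0 : (QuotientAddGroup.mk' (AddSubgroup.zmultiples (Real.log 6))) (Real.log 6) = 0 :=
          AddCircle.coe_period _
        simp only [SetLike.mem_coe, AddSubgroup.mem_comap, h0]
        exact zero_mem _
    have := hle hx
    rw [AddSubgroup.mem_comap, AddSubgroup.mem_zmultiples_iff] at this
    obtain ⟨k, hk⟩ := this
    exact ⟨k, hk⟩
  exact fun z => closure_mono hsub (hd z)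

noncomputable def kariMap (x : ℝ) : ℝ := if x ≤ 1 then 2 * x else x / 3

theorem kariMap_uniform_hitting (a b : ℝ) (ha : 1/3 ≤ a) (hab : a < b) (hb : b ≤ 2) :
    ∃ N : ℕ, ∀ x ∈ Set.Icc (1/3 : ℝ) 2, ∃ n ≤ N, kariMap^[n] x ∈ Set.Ioo a b := by
  haveI : Fact ((0:ℝ) < Real.log 6) := ⟨Real.log_pos (by norm_num)⟩
  set α : AddCircle (Real.log 6) := ((Real.log 2 : ℝ) : AddCircle (Real.log 6)) with hα
  have hl2 : (0:ℝ) < Real.log 2 := Real.log_pos (by norm_num)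
  have hl3 : (0:ℝ) < Real.log 3 := Real.log_pos (by norm_num)
  have hl6 : Real.log 6 = Real.log 2 + Real.log 3 := by
    rw [show (6:ℝ) = 2 * 3 by norm_num, Real.log_mul (by norm_num) (by norm_num)]
  have hl13 : Real.log (1/3 : ℝ) = -Real.log 3 := by
    rw [one_div, Real.log_inv]
  have ha0 : (0:ℝ) < a := lt_of_lt_of_le (by norm_num) ha
  have hb0 : (0:ℝ) < b := ha0.trans hab
  have hpos : ∀ x : ℝ, 0 < x → 0 < kariMap x := by
    intro x hx
    unfold kariMap
    split <;> linarith
  have hstep : ∀ x : ℝ, 0 < x →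
      ((Real.log (kariMap x) : ℝ) : AddCircle (Real.log 6)) =
        ((Real.log x : ℝ) : AddCircle (Real.log 6)) + α := by
    intro x hx
    unfold kariMap
    split
    · rw [Real.log_mul (by norm_num) hx.ne', AddCircle.coe_add, add_comm]
    · rw [Real.log_div hx.ne' (by norm_num)]
      have e : Real.log x - Real.log 3 = Real.log x + Real.log 2 - Real.log 6 := by
        rw [hl6]; ring
      have h1 : ((Real.log x + Real.log 2 - Real.log 6 + Real.log 6 : ℝ) :
          AddCircle (Real.log 6)) =
          ((Real.log x + Real.log 2 - Real.log 6 : ℝ) : AddCircle (Real.log 6)) :=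
        AddCircle.coe_add_period _ _
      have e2 : Real.log x + Real.log 2 - Real.log 6 + Real.log 6 =
          Real.log x + Real.log 2 := by ring
      rw [e2] at h1
      rw [e, ← h1, AddCircle.coe_add]
  have hinv : ∀ x ∈ Set.Icc (1/3:ℝ) 2, kariMap x ∈ Set.Icc (1/3:ℝ) 2 := by
    intro x hx
    obtain ⟨h1, h2⟩ := hx
    unfold kariMap
    split <;> rename_i h
    · constructor <;> linarith
    · push_neg at h
      constructor <;> linarith
  have hiter : ∀ n : ℕ, ∀ x ∈ Set.Icc (1/3:ℝ) 2, kariMap^[n] x ∈ Set.Icc (1/3:ℝ) 2 ∧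
      ((Real.log (kariMap^[n] x) : ℝ) : AddCircle (Real.log 6)) =
        ((Real.log x : ℝ) : AddCircle (Real.log 6)) + n • α := by
    intro n
    induction n with
    | zero =>
      intro x hx
      refine ⟨by simpa using hx, by simp⟩
    | succ n ih =>
      intro x hx
      obtain ⟨hmem, heq⟩ := ih x hx
      have hy0 : 0 < kariMap^[n] x := lt_of_lt_of_le (by norm_num) hmem.1
      constructor
      · rw [Function.iterate_succ_apply']
        exact hinv _ hmem
      · rw [Function.iterate_succ_apply', hstep _ hy0, heq, succ_nsmul, add_assoc]
  set V : Set (AddCircle (Real.log 6)) :=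
    (fun r : ℝ => ((r : ℝ) : AddCircle (Real.log 6))) '' Set.Ioo (Real.log a) (Real.log b)
    with hVdef
  have hVopen : IsOpen V := QuotientAddGroup.isOpenQuotientMap_mk.isOpenMap _ isOpen_Ioo
  have hlab : Real.log a < Real.log b := Real.log_lt_log ha0 hab
  have hVne : V.Nonempty :=
    ⟨_, ⟨(Real.log a + Real.log b)/2, ⟨by linarith, by linarith⟩, rfl⟩⟩
  set U : ℕ → Set (AddCircle (Real.log 6)) := fun n => (fun z => z + n • α) ⁻¹' V with hU
  have hUopen : ∀ n, IsOpen (U n) := fun n => hVopen.preimage (by continuity)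
  have hcover : (Set.univ : Set (AddCircle (Real.log 6))) ⊆ ⋃ n, U n := by
    intro z _
    have hopen : IsOpen ((fun w : AddCircle (Real.log 6) => z + w) ⁻¹' V) :=
      hVopen.preimage (by continuity)
    have hne : ((fun w : AddCircle (Real.log 6) => z + w) ⁻¹' V).Nonempty := by
      obtain ⟨v, hv⟩ := hVne
      exact ⟨v - z, by simp [hv]⟩
    obtain ⟨n, hn⟩ := kari_denseRange_nsmul.exists_mem_open hopen hne
    exact Set.mem_iUnion.mpr ⟨n, hn⟩
  obtain ⟨t, ht⟩ := isCompact_univ.elim_finite_subcover U hUopen hcover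
  refine ⟨t.sup id, ?_⟩
  intro x hx
  obtain ⟨n, hnt, hn⟩ := Set.mem_iUnion₂.mp (ht (Set.mem_univ
    ((Real.log x : ℝ) : AddCircle (Real.log 6))))
  refine ⟨n, Finset.le_sup (f := id) hnt, ?_⟩
  obtain ⟨hymem, hyeq⟩ := hiter n x hx
  set y := kariMap^[n] x with hydef
  have hy0 : (0:ℝ) < y := lt_of_lt_of_le (by norm_num) hymem.1
  have hmemV : ((Real.log y : ℝ) : AddCircle (Real.log 6)) ∈ V := by
    rw [hyeq]; exact hn
  obtain ⟨c, hc, hce⟩ := hmemV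
  -- from ↑c = ↑(log y) deduce c - log y is an integer multiple of log 6
  have hcc : (QuotientAddGroup.mk c : AddCircle (Real.log 6)) = QuotientAddGroup.mk (Real.log y) :=
    hce
  rw [QuotientAddGroup.eq] at hcc
  obtain ⟨k, hk⟩ := AddSubgroup.mem_zmultiples_iff.mp hcc
  have hk' : (k : ℝ) * Real.log 6 = Real.log y - c := by
    have h2 := hk
    push_cast [zsmul_eq_mul] at h2
    linarith
  -- bounds
  have hya : -Real.log 3 ≤ Real.log y := by
    rw [← hl13]; exact Real.log_le_log (by norm_num) hymem.1
  have hyb : Real.log y ≤ Real.log 2 := Real.log_le_log hy0 hymem.2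
  have hca : -Real.log 3 ≤ Real.log a := by
    rw [← hl13]; exact Real.log_le_log (by norm_num) ha
  have hcb : Real.log b ≤ Real.log 2 := Real.log_le_log hb0 hb
  have hk0 : k = 0 := by
    have h6 : (0:ℝ) < Real.log 6 := by linarith
    have hlo : -Real.log 6 < (k:ℝ) * Real.log 6 := by
      rw [hk', hl6]; cases hc; linarith
    have hhi : (k:ℝ) * Real.log 6 < Real.log 6 := by
      rw [hk', hl6]; cases hc; linarith
    have hk1 : (k:ℝ) < 1 :=
      (mul_lt_mul_iff_of_pos_right h6).mp (show (k:ℝ) * Real.log 6 < 1 * Real.log 6 by linarith)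
    have hk2 : (-1:ℝ) < (k:ℝ) :=
      (mul_lt_mul_iff_of_pos_right h6).mp (show (-1:ℝ) * Real.log 6 < (k:ℝ) * Real.log 6 by linarith)
    have hk1' : k < 1 := by exact_mod_cast hk1
    have hk2' : -1 < k := by exact_mod_cast hk2
    omega
  have hcy : c = Real.log y := by
    rw [hk0] at hk'; simp at hk'; linarith
  rw [hcy] at hc
  exact ⟨(Real.log_lt_log_iff ha0 hy0).mp hc.1, (Real.log_lt_log_iff hy0 hb0).mp hc.2⟩
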